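/- For every integer n ≥ 0, as real s → ∞, ζ(s) - Q_n(s) is asymptotically equivalent to p_{n+1}^{-s}; i.e., lim_{s→∞} p_{n+1}^s (ζ(s) - Q_n(s)) = 1. -/
import Mathlib


open Filter Real

noncomputable def zetaR (s : ℝ) : ℝ := ∑' m : ℕ, (m : ℝ) ^ (-s)

/-- `P k` is the (k+1)-st prime: `P 0 = 2`, `P 1 = 3`, ... -/
noncomputable def P (k : ℕ) : ℕ := Nat.nth Nat.Prime k

/-- Partial Euler product `Q n s = ∏_{k=1}^n (1 - p_k^{-s})⁻¹`. -/
noncomputable def Q (n : ℕ) (s : ℝ) : ℝ := ∏ k ∈ Finset.range n, (1 - (P k : ℝ) ^ (-s))⁻¹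

/-- `m ↦ (m : ℝ) ^ (-s)` as a monoid hom. -/
noncomputable def rpowHom (s : ℝ) : ℕ →* ℝ where
  toFun m := (m : ℝ) ^ (-s)
  map_one' := by simp
  map_mul' x y := by
    push_cast
    exact Real.mul_rpow (Nat.cast_nonneg x) (Nat.cast_nonneg y)

lemma summable_rpow_neg {s : ℝ} (hs : 1 < s) :
    Summable (fun m : ℕ => (m : ℝ) ^ (-s)) :=
  Real.summable_nat_rpow.mpr (by linarith)

lemma Q_eq_tsum {n : ℕ} {s : ℝ} (hs : 1 < s) :
    Q n s = ∑' m : (P n).smoothNumbers, ((m : ℕ) : ℝ) ^ (-s) := by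
  have hsum : Summable (rpowHom s) := summable_rpow_neg hs
  have h1 : Q n s = ∏ p ∈ (P n).primesBelow, (1 - (rpowHom s) p)⁻¹ := by
    refine Finset.prod_nbij' (fun k => Nat.nth Nat.Prime k) (fun q => Nat.count Nat.Prime q)
      ?_ ?_ ?_ ?_ ?_
    · intro a ha
      rw [Nat.mem_primesBelow]
      exact ⟨(Nat.nth_lt_nth Nat.infinite_setOf_prime).mpr (Finset.mem_range.mp ha),
        Nat.prime_nth_prime a⟩
    · intro q hq
      have hq' := Nat.prime_of_mem_primesBelow hq
      have hlt := Nat.lt_of_mem_primesBelow hq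
      rw [Finset.mem_range]
      have : Nat.nth Nat.Prime (Nat.count Nat.Prime q) = q := Nat.nth_count hq'
      rw [← Nat.nth_lt_nth Nat.infinite_setOf_prime, this]
      exact hlt
    · intro a _
      exact Nat.count_nth_of_infinite Nat.infinite_setOf_prime a
    · intro q hq
      exact Nat.nth_count (Nat.prime_of_mem_primesBelow hq)
    · intro a _
      rfl
  rw [h1, EulerProduct.prod_primesBelow_geometric_eq_tsum_smoothNumbers hsum (P n)]
  rfl

lemma p_not_smooth (n : ℕ) : (P n : ℕ) ∉ (P n).smoothNumbers := by
  intro h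
  rw [Nat.mem_smoothNumbers] at h
  have hp : (P n).Prime := Nat.prime_nth_prime n
  exact lt_irrefl _ (h.2 (P n) (by rw [Nat.primeFactorsList_prime hp]; simp))

theorem zeta_sub_Q_asymptotic (n : ℕ) :
    Tendsto (fun s : ℝ => (P n : ℝ) ^ s * (zetaR s - Q n s)) atTop (nhds 1) := by
  set p : ℕ := P n with hP
  have hp : p.Prime := Nat.prime_nth_prime n
  have hp0 : (0 : ℝ) < (p : ℝ) := by exact_mod_cast hp.pos
  set S : Set ℕ := p.smoothNumbers with hS
  -- the auxiliary family of functions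
  set G : ℝ → ℕ → ℝ := fun s m => Set.indicator Sᶜ (fun m => (p : ℝ) ^ s * (m : ℝ) ^ (-s)) m
    with hG
  -- For each non-smooth m > p we have m ≥ p+... and p/m < 1.
  have hge : ∀ m : ℕ, m ∉ S → m ≠ 0 → p ≤ m := by
    intro m hm hm0
    by_contra hlt
    exact hm (Nat.mem_smoothNumbers_of_lt (Nat.pos_of_ne_zero hm0) (lt_of_not_ge hlt))
  -- key identity for s > 1
  have key : ∀ s : ℝ, 1 < s → (p : ℝ) ^ s * (zetaR s - Q n s) = ∑' m : ℕ, G s m := by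
    intro s hs
    have hsum : Summable (fun m : ℕ => (m : ℝ) ^ (-s)) := summable_rpow_neg hs
    have hQ : Q n s = ∑' m : ℕ, Set.indicator S (fun m : ℕ => (m : ℝ) ^ (-s)) m := by
      rw [Q_eq_tsum hs]; exact tsum_subtype S (fun m : ℕ => (m : ℝ) ^ (-s))
    have hzQ : zetaR s - Q n s = ∑' m : ℕ, Set.indicator Sᶜ (fun m : ℕ => (m : ℝ) ^ (-s)) m := by
      rw [zetaR, hQ, ← Summable.tsum_sub hsum (hsum.indicator S)]
      congr 1
      funext m
      rw [Set.indicator_compl]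
      rfl
    rw [hzQ, ← tsum_mul_left]
    congr 1
    funext m
    by_cases hm : m ∈ Sᶜ
    · rw [hG]
      simp only [Set.indicator_of_mem hm]
    · rw [hG]
      simp only [Set.indicator_of_notMem hm, mul_zero]
  -- limit of tsum via dominated convergence
  have hlim : Tendsto (fun s : ℝ => ∑' m : ℕ, G s m) atTop
      (nhds (∑' m : ℕ, if m = p then (1 : ℝ) else 0)) := by
    apply tendsto_tsum_of_dominated_convergence
      (bound := fun m : ℕ => Set.indicator Sᶜ (fun m : ℕ => (p : ℝ) ^ (2:ℝ) * (m : ℝ) ^ (-(2:ℝ))) m)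
    · exact (Summable.mul_left _ (Real.summable_nat_rpow.mpr (by norm_num))).indicator Sᶜ
    · -- pointwise convergence
      intro m
      by_cases hm : m ∈ Sᶜ
      · by_cases hm0 : m = 0
        · subst hm0
          have h0 : (0 : ℕ) ≠ p := fun h => hp.ne_zero h.symm
          simp only [if_neg h0]
          apply Tendsto.congr' (f₁ := fun _ => (0:ℝ))
          · filter_upwards [eventually_gt_atTop (0:ℝ)] with s hs
            rw [hG]
            simp only [Set.indicator_of_mem hm, Nat.cast_zero]
            rw [Real.zero_rpow (by linarith), mul_zero]
          · exact tendsto_const_nhds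
        · by_cases hmp : m = p
          · subst hmp
            simp only [if_pos rfl]
            apply Tendsto.congr' (f₁ := fun _ => (1:ℝ))
            · filter_upwards with s
              rw [hG]
              simp only [Set.indicator_of_mem hm]
              rw [Real.rpow_neg (le_of_lt hp0),
                mul_inv_cancel₀ (ne_of_gt (Real.rpow_pos_of_pos hp0 s))]
            · exact tendsto_const_nhds
          · -- m > p
            have hpm : p < m := lt_of_le_of_ne (hge m hm hm0) (fun h => hmp h.symm)
            have hm0' : (0:ℝ) < (m:ℝ) := by exact_mod_cast Nat.pos_of_ne_zero hm0
            simp only [if_neg hmp]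
            have heq : ∀ s : ℝ, G s m = ((p : ℝ) / m) ^ s := by
              intro s
              rw [hG]
              simp only [Set.indicator_of_mem hm]
              rw [Real.div_rpow (le_of_lt hp0) (le_of_lt hm0'), div_eq_mul_inv,
                Real.rpow_neg (le_of_lt hm0')]
            apply Tendsto.congr (fun s => (heq s).symm)
            apply tendsto_rpow_atTop_of_base_lt_one
            · have : (0:ℝ) < (p:ℝ)/m := div_pos hp0 hm0'
              linarith
            · rw [div_lt_one hm0']
              exact_mod_cast hpm
      · -- smooth m : both sides zero
        have hmp : m ≠ p := fun h => (hm (by rw [h]; exact p_not_smooth n))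
        simp only [if_neg hmp]
        apply Tendsto.congr' (f₁ := fun _ => (0:ℝ))
        · filter_upwards with s
          rw [hG]
          simp only [Set.indicator_of_notMem hm]
        · exact tendsto_const_nhds
    · -- bound
      filter_upwards [eventually_ge_atTop (2:ℝ)] with s hs m
      by_cases hm : m ∈ Sᶜ
      · rw [hG]
        simp only [Set.indicator_of_mem hm]
        by_cases hm0 : m = 0
        · subst hm0
          simp only [Nat.cast_zero]
          rw [Real.zero_rpow (by linarith : -s ≠ 0), Real.zero_rpow (by norm_num : -(2:ℝ) ≠ 0)]
          simp
        · have hm0' : (0:ℝ) < (m:ℝ) := by exact_mod_cast Nat.pos_of_ne_zero hm0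
          have hpm : (p:ℝ) ≤ (m:ℝ) := by exact_mod_cast hge m hm hm0
          have hfrac : ∀ t : ℝ, (p : ℝ) ^ t * (m : ℝ) ^ (-t) = ((p : ℝ) / m) ^ t := by
            intro t
            rw [Real.div_rpow (le_of_lt hp0) (le_of_lt hm0'), div_eq_mul_inv,
              Real.rpow_neg (le_of_lt hm0')]
          have hnn : (0:ℝ) ≤ (p : ℝ) ^ s * (m : ℝ) ^ (-s) := by
            rw [hfrac]
            exact Real.rpow_nonneg (div_nonneg (le_of_lt hp0) (le_of_lt hm0')) s
          rw [Real.norm_of_nonneg hnn, hfrac, hfrac]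
          exact Real.rpow_le_rpow_of_exponent_ge (div_pos hp0 hm0')
            ((div_le_one hm0').mpr hpm) hs
      · rw [hG]
        simp only [Set.indicator_of_notMem hm, norm_zero, le_refl]
  have htsum : (∑' m : ℕ, if m = p then (1 : ℝ) else 0) = 1 := tsum_ite_eq p 1
  rw [htsum] at hlim
  apply Tendsto.congr' _ hlim
  filter_upwards [eventually_gt_atTop (1:ℝ)] with s hs
  exact (key s hs).symm
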